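/- Let α₁,…,αₘ ∈ ℚ^k be rational vectors and Δ their convex hull. Then max over i of ⟨ξ, αᵢ⟩ ≥ 0 for every ξ ∈ ℤ^k if and only if 0 ∈ Δ. (Hilbert–Mumford criterion for semistability under a torus action, convex-geometric form.) -/

import Mathlib

open Set

/-- Hilbert–Mumford criterion for semistability under a torus
action, convex-geometric form: for rational vectors `α₁, …, αₘ ∈ ℚᵏ`,
`maxᵢ ⟨ξ, αᵢ⟩ ≥ 0` for every integral `ξ ∈ ℤᵏ` if and only if `0` lies in the
convex hull of the `αᵢ`. -/
theorem stmt_8 (k m : ℕ) (hm : 0 < m) (α : Fin m → Fin k → ℚ) :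
    (∀ ξ : Fin k → ℤ,
        0 ≤ Finset.univ.sup' ⟨⟨0, hm⟩, Finset.mem_univ _⟩
          (fun i => ∑ j, (ξ j : ℝ) * (α i j : ℝ))) ↔
      (0 : Fin k → ℝ) ∈ convexHull ℝ (Set.range fun i j => (α i j : ℝ)) := by
  constructor
  · intro h
    by_contra h0
    obtain ⟨f, u, hu0, hsep⟩ :=
      geometric_hahn_banach_point_closed (convex_convexHull ℝ _)
        ((Set.finite_range _).isClosed_convexHull (𝕜 := ℝ)) h0
    rw [map_zero] at hu0
    have hα : ∀ i, u < f (fun j => (α i j : ℝ)) := fun i =>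
      hsep _ (subset_convexHull ℝ _ (Set.mem_range_self i))
    set w : Fin k → ℝ := fun j => f (fun l => if j = l then 1 else 0) with hw
    have hfx : ∀ x : Fin k → ℝ, f x = ∑ j, x j * w j := by
      intro x
      have := LinearMap.pi_apply_eq_sum_univ (f : (Fin k → ℝ) →ₗ[ℝ] ℝ) x
      simpa [smul_eq_mul, hw] using this
    -- approximate -w by rationals
    set B : ℝ := (∑ i, ∑ j, |(α i j : ℝ)|) + 1 with hB
    have hB1 : (1 : ℝ) ≤ B := by
      have : 0 ≤ ∑ i, ∑ j, |(α i j : ℝ)| :=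
        Finset.sum_nonneg fun i _ => Finset.sum_nonneg fun j _ => abs_nonneg _
      linarith
    have hBpos : 0 < B := lt_of_lt_of_le one_pos hB1
    have hδ : 0 < u / B := div_pos hu0 hBpos
    have hq : ∀ j : Fin k, ∃ q : ℚ, |(-w j) - (q : ℝ)| < u / B := fun j =>
      exists_rat_near (-w j) hδ
    choose q hqw using hq
    have key : ∀ i, ∑ j, (q j : ℝ) * (α i j : ℝ) < 0 := by
      intro i
      have h1 : ∑ j, (q j : ℝ) * (α i j : ℝ)
          = (∑ j, ((q j : ℝ) + w j) * (α i j : ℝ)) - f (fun j => (α i j : ℝ)) := by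
        rw [hfx]
        rw [← Finset.sum_sub_distrib]
        congr 1; ext j; ring
      have h2 : ∑ j, ((q j : ℝ) + w j) * (α i j : ℝ) ≤ ∑ j, (u / B) * |(α i j : ℝ)| := by
        apply Finset.sum_le_sum
        intro j _
        calc ((q j : ℝ) + w j) * (α i j : ℝ) ≤ |((q j : ℝ) + w j) * (α i j : ℝ)| := le_abs_self _
          _ = |(q j : ℝ) + w j| * |(α i j : ℝ)| := abs_mul _ _
          _ ≤ (u / B) * |(α i j : ℝ)| := by
              apply mul_le_mul_of_nonneg_right _ (abs_nonneg _)
              have := hqw j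
              rw [abs_sub_comm] at this
              have : |(q j : ℝ) + w j| < u / B := by
                calc |(q j : ℝ) + w j| = |(q j : ℝ) - (-w j)| := by ring_nf
                  _ < u / B := this
              exact le_of_lt this
      have h3 : ∑ j, (u / B) * |(α i j : ℝ)| < u := by
        rw [← Finset.mul_sum]
        have hle : ∑ j, |(α i j : ℝ)| ≤ B - 1 := by
          rw [hB]
          have : ∑ j, |(α i j : ℝ)| ≤ ∑ i', ∑ j, |(α i' j : ℝ)| :=
            Finset.single_le_sum (f := fun i' => ∑ j, |(α i' j : ℝ)|)
              (fun i' _ => Finset.sum_nonneg fun j _ => abs_nonneg _) (Finset.mem_univ i)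
          linarith
        calc (u / B) * ∑ j, |(α i j : ℝ)| ≤ (u / B) * (B - 1) :=
              mul_le_mul_of_nonneg_left hle (le_of_lt hδ)
          _ < (u / B) * B := by
              apply mul_lt_mul_of_pos_left _ hδ
              linarith
          _ = u := div_mul_cancel₀ u (ne_of_gt hBpos)
      have h4 := hα i
      linarith
    -- clear denominators
    set N : ℚ := ∏ l, ((q l).den : ℚ) with hN
    set ξ : Fin k → ℤ := fun j => (q j).num * ∏ l ∈ Finset.univ.erase j, ((q l).den : ℤ) with hξ
    have hξq : ∀ j, (ξ j : ℚ) = q j * N := by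
      intro j
      rw [hξ, hN]
      push_cast
      rw [← Finset.mul_prod_erase _ _ (Finset.mem_univ j)]
      rw [← mul_assoc, Rat.mul_den_eq_num]
    have hNpos : (0 : ℚ) < N := by
      rw [hN]
      apply Finset.prod_pos
      intro l _
      exact_mod_cast (q l).pos
    have := h ξ
    obtain ⟨i, -, hi⟩ := (Finset.le_sup'_iff _).mp this
    have hsum : ∑ j, (ξ j : ℝ) * (α i j : ℝ) = (N : ℝ) * ∑ j, (q j : ℝ) * (α i j : ℝ) := by
      rw [Finset.mul_sum]
      apply Finset.sum_congr rfl
      intro j _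
      have : ((ξ j : ℚ) : ℝ) = (q j : ℝ) * (N : ℝ) := by
        rw [hξq j]; push_cast; ring
      push_cast at this ⊢
      rw [this]; ring
    rw [hsum] at hi
    have hNR : (0 : ℝ) < (N : ℝ) := by exact_mod_cast hNpos
    nlinarith [key i]
  · intro h0 ξ
    by_contra hneg
    push_neg at hneg
    set f : (Fin k → ℝ) →ₗ[ℝ] ℝ := ∑ j, (ξ j : ℝ) • LinearMap.proj j with hf
    have hfx : ∀ x : Fin k → ℝ, f x = ∑ j, (ξ j : ℝ) * x j := by
      intro x
      simp [hf, LinearMap.sum_apply, smul_eq_mul]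
    have hsub : convexHull ℝ (Set.range fun i j => (α i j : ℝ)) ⊆ {x | f x < 0} := by
      apply convexHull_min
      · rintro _ ⟨i, rfl⟩
        have hle := Finset.le_sup' (fun i => ∑ j, (ξ j : ℝ) * (α i j : ℝ))
          (Finset.mem_univ i)
        simp only [Set.mem_setOf_eq, hfx]
        exact lt_of_le_of_lt hle hneg
      · exact convex_halfSpace_lt (LinearMap.isLinear f) 0
    have := hsub h0
    simp only [Set.mem_setOf_eq, map_zero] at this
    exact lt_irrefl 0 this
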